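/- Let R₁ < R₂ be the two real roots of c R² + (cα − δ − λ − β) R − (δ+β)α = 0 and let k(x) := (R₁+α) e^{R₁ x} − (R₂+α) e^{R₂ x}. Then k satisfies the integro-differential equation c k'(x) − (δ+λ+β) k(x) + λ ∫₀ˣ k(x−y) α e^{−α y} dy = 0 for all x ≥ 0. -/

import Mathlib

open Real

private lemma int_exp_aux (b x : ℝ) (hb : b ≠ 0) :
    ∫ y in (0:ℝ)..x, Real.exp (b * y) = (Real.exp (b * x) - 1) / b := by
  have h : ∀ y ∈ Set.uIcc (0:ℝ) x,
      HasDerivAt (fun y => Real.exp (b * y) / b) (Real.exp (b * y)) y := by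
    intro y _
    have := ((hasDerivAt_id y).const_mul b).exp
    exact (this.div_const b).congr_deriv (by simp [hb])
  rw [intervalIntegral.integral_eq_sub_of_hasDerivAt h
    (Continuous.intervalIntegrable (by fun_prop) 0 x)]
  simp [sub_div]

private lemma conv_aux (R α x : ℝ) (h : R + α ≠ 0) :
    ∫ y in (0:ℝ)..x, (R + α) * Real.exp (R * (x - y)) * (α * Real.exp (-α * y))
      = α * (Real.exp (R * x) - Real.exp (-α * x)) := by
  have hcongr : ∀ y : ℝ,
      (R + α) * Real.exp (R * (x - y)) * (α * Real.exp (-α * y))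
        = ((R + α) * α * Real.exp (R * x)) * Real.exp (-(R + α) * y) := by
    intro y
    rw [show R * (x - y) = R * x + (- R * y) by ring, Real.exp_add,
      show (-(R + α) * y) = -R * y + -α * y by ring, Real.exp_add]
    ring
  rw [intervalIntegral.integral_congr (fun y _ => hcongr y),
    intervalIntegral.integral_const_mul, int_exp_aux _ _ (neg_ne_zero.2 h)]
  have key : Real.exp (R * x) * Real.exp (-(R + α) * x) = Real.exp (-α * x) := by
    rw [← Real.exp_add]; ring_nf
  have h' : -R - α ≠ 0 := fun hh => h (by linarith)
  set E := Real.exp (R * x) with hE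
  set F := Real.exp (-(R + α) * x) with hF
  set G := Real.exp (-α * x) with hG
  have hi : (R + α) * (-R - α)⁻¹ = -1 := by
    rw [mul_comm, inv_mul_eq_div, div_eq_iff h']; ring
  field_simp [h']
  have hi2 : (R + α) * (-α - R)⁻¹ = -1 := by
    rw [mul_comm, inv_mul_eq_div, div_eq_iff (by intro hh; exact h (by linarith))]; ring
  linear_combination (-α) * key

theorem k_solves_integro_differential_equation
    (c lam δ β α R₁ R₂ : ℝ) (hc : 0 < c) (hlam : 0 < lam) (hδ : 0 < δ) (hβ : 0 < β) (hα : 0 < α)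
    (hR : R₁ < R₂)
    (hroot1 : c * R₁ ^ 2 + (c * α - δ - lam - β) * R₁ - (δ + β) * α = 0)
    (hroot2 : c * R₂ ^ 2 + (c * α - δ - lam - β) * R₂ - (δ + β) * α = 0)
    (hR1 : -α < R₁) (hR1' : R₁ < 0) (hR2 : 0 < R₂) :
    ∀ x ≥ (0:ℝ),
      c * deriv (fun t => (R₁ + α) * Real.exp (R₁ * t) - (R₂ + α) * Real.exp (R₂ * t)) x
        - (δ + lam + β) * ((R₁ + α) * Real.exp (R₁ * x) - (R₂ + α) * Real.exp (R₂ * x))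
        + lam * ∫ y in (0:ℝ)..x,
            ((R₁ + α) * Real.exp (R₁ * (x - y)) - (R₂ + α) * Real.exp (R₂ * (x - y)))
              * (α * Real.exp (-α * y)) = 0 := by
  intro x _
  have h1 : R₁ + α ≠ 0 := by linarith
  have h2 : R₂ + α ≠ 0 := by linarith
  -- deriv
  have hd : HasDerivAt (fun t => (R₁ + α) * Real.exp (R₁ * t) - (R₂ + α) * Real.exp (R₂ * t))
      ((R₁ + α) * (R₁ * Real.exp (R₁ * x)) - (R₂ + α) * (R₂ * Real.exp (R₂ * x))) x := by
    have e1 := (((hasDerivAt_id x).const_mul R₁).exp).const_mul (R₁ + α)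
    have e2 := (((hasDerivAt_id x).const_mul R₂).exp).const_mul (R₂ + α)
    exact (e1.sub e2).congr_deriv (by simp only [id]; ring)
  rw [hd.deriv]
  -- integral
  have hint : (∫ y in (0:ℝ)..x,
      ((R₁ + α) * Real.exp (R₁ * (x - y)) - (R₂ + α) * Real.exp (R₂ * (x - y)))
        * (α * Real.exp (-α * y)))
      = α * (Real.exp (R₁ * x) - Real.exp (-α * x))
        - α * (Real.exp (R₂ * x) - Real.exp (-α * x)) := by
    have hsplit : ∀ y : ℝ,
        ((R₁ + α) * Real.exp (R₁ * (x - y)) - (R₂ + α) * Real.exp (R₂ * (x - y)))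
          * (α * Real.exp (-α * y))
        = (R₁ + α) * Real.exp (R₁ * (x - y)) * (α * Real.exp (-α * y))
          - (R₂ + α) * Real.exp (R₂ * (x - y)) * (α * Real.exp (-α * y)) := by
      intro y; ring
    rw [intervalIntegral.integral_congr (fun y _ => hsplit y),
      intervalIntegral.integral_sub
        ((by fun_prop : Continuous fun y =>
          (R₁ + α) * Real.exp (R₁ * (x - y)) * (α * Real.exp (-α * y))).intervalIntegrable _ _)
        ((by fun_prop : Continuous fun y =>
          (R₂ + α) * Real.exp (R₂ * (x - y)) * (α * Real.exp (-α * y))).intervalIntegrable _ _),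
      conv_aux _ _ _ h1, conv_aux _ _ _ h2]
  rw [hint]
  linear_combination Real.exp (R₁ * x) * hroot1 - Real.exp (R₂ * x) * hroot2
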